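/- Let q be prime. Assuming the Weil bound for Kloosterman sums, there is an absolute constant C such that Var(μ_q; B_R) = vol(B_R)/φ(q) + E with |E| ≤ C·R⁴·(log q)², for all R < 1/2. -/

import Mathlib

open Real Complex MeasureTheory

noncomputable def kloostermanS (q : ℕ) (m n : ℤ) : ℂ :=
  ∑ d ∈ (Finset.range q).filter (fun d => Nat.Coprime d q),
    Complex.exp (2 * Real.pi * Complex.I *
      (((m * d + n * (((d : ZMod q)⁻¹).val : ℤ) : ℤ) : ℂ) / q))

noncomputable def enorm2 (v : ℝ × ℝ) : ℝ := Real.sqrt (v.1 ^ 2 + v.2 ^ 2)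

noncomputable def KR (R : ℝ) (x y : ℝ × ℝ) : ℝ :=
  ∑' p : ℤ × ℤ, if enorm2 (x + ((p.1 : ℝ), (p.2 : ℝ)) - y) ≤ R then (1 : ℝ) else 0

noncomputable def muVal (q : ℕ) (R : ℝ) (x : ℝ × ℝ) : ℝ :=
  (1 / (q.totient : ℝ)) *
    ∑ d ∈ (Finset.range q).filter (fun d => Nat.Coprime d q),
      KR R ((d : ℝ) / q, ((((d : ZMod q)⁻¹).val : ℕ) : ℝ) / q) x

noncomputable def varMu (q : ℕ) (R : ℝ) : ℝ :=
  ∫ x in (Set.Ioc (0 : ℝ) 1 ×ˢ Set.Ioc (0 : ℝ) 1),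
    (muVal q R x - Real.pi * R ^ 2) ^ 2

namespace VarAux

/-- the integer-vector embedding -/
def pv (p : ℤ × ℤ) : ℝ × ℝ := ((p.1 : ℝ), (p.2 : ℝ))

lemma enorm2_eq_abs (v : ℝ × ℝ) :
    enorm2 v = ‖Complex.measurableEquivRealProd.symm v‖ := by
  simp [enorm2, Complex.norm_def, Complex.normSq_apply, sq]

lemma enorm2_nonneg (v : ℝ × ℝ) : 0 ≤ enorm2 v := Real.sqrt_nonneg _

lemma enorm2_neg (v : ℝ × ℝ) : enorm2 (-v) = enorm2 v := by
  simp [enorm2]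

lemma enorm2_triangle (a b : ℝ × ℝ) : enorm2 (a + b) ≤ enorm2 a + enorm2 b := by
  rw [enorm2_eq_abs, enorm2_eq_abs, enorm2_eq_abs]
  have : (Complex.measurableEquivRealProd.symm (a + b)) =
      Complex.measurableEquivRealProd.symm a + Complex.measurableEquivRealProd.symm b := by
    simp [Complex.ext_iff]
  rw [this]
  exact norm_add_le _ _

lemma abs_fst_le (v : ℝ × ℝ) : |v.1| ≤ enorm2 v := by
  rw [enorm2]
  have : |v.1| = Real.sqrt (v.1 ^ 2) := by rw [Real.sqrt_sq_eq_abs]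
  rw [this]
  exact Real.sqrt_le_sqrt (by nlinarith [sq_nonneg v.2])

lemma abs_snd_le (v : ℝ × ℝ) : |v.2| ≤ enorm2 v := by
  rw [enorm2]
  have : |v.2| = Real.sqrt (v.2 ^ 2) := by rw [Real.sqrt_sq_eq_abs]
  rw [this]
  exact Real.sqrt_le_sqrt (by nlinarith [sq_nonneg v.1])

lemma enorm2_int_ge_one {p : ℤ × ℤ} (hp : p ≠ 0) : 1 ≤ enorm2 (pv p) := by
  rcases ne_or_eq p.1 0 with h | h
  · have h1 : (1 : ℝ) ≤ |(p.1 : ℝ)| := by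
      rw [← Int.cast_abs]
      exact_mod_cast Int.one_le_abs h
    exact h1.trans (abs_fst_le (pv p))
  · have h2 : p.2 ≠ 0 := by
      intro h2; exact hp (Prod.ext h h2)
    have h1 : (1 : ℝ) ≤ |(p.2 : ℝ)| := by
      rw [← Int.cast_abs]
      exact_mod_cast Int.one_le_abs h2
    exact h1.trans (abs_snd_le (pv p))

end VarAux

namespace VarAux

/-- closed Euclidean ball as a subset of ℝ × ℝ -/
def D (c : ℝ × ℝ) (r : ℝ) : Set (ℝ × ℝ) := {x | enorm2 (x - c) ≤ r}

/-- periodized ball -/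
def T (c : ℝ × ℝ) (r : ℝ) : Set (ℝ × ℝ) := {x | ∃ p : ℤ × ℤ, enorm2 (c + pv p - x) ≤ r}

def Q : Set (ℝ × ℝ) := Set.Ioc (0 : ℝ) 1 ×ˢ Set.Ioc (0 : ℝ) 1

/-- translated fundamental domain -/
def Qs (p : ℤ × ℤ) : Set (ℝ × ℝ) := (fun x => x - pv p) ⁻¹' Q

lemma mem_T_iff {c : ℝ × ℝ} {r : ℝ} {x : ℝ × ℝ} :
    x ∈ T c r ↔ ∃ p : ℤ × ℤ, x ∈ D (c + pv p) r := by
  constructor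
  · rintro ⟨p, hp⟩
    exact ⟨p, by simpa [D, ← enorm2_neg (x - (c + pv p))] using hp⟩
  · rintro ⟨p, hp⟩
    exact ⟨p, by simpa [D, ← enorm2_neg (x - (c + pv p))] using hp⟩

lemma measurableSet_D (c : ℝ × ℝ) (r : ℝ) : MeasurableSet (D c r) := by
  have hcont : Continuous enorm2 := by
    apply Real.continuous_sqrt.comp
    exact ((continuous_fst.pow 2).add (continuous_snd.pow 2))
  exact (isClosed_le (hcont.comp (continuous_id.sub continuous_const)) continuous_const).measurableSet

lemma measurableSet_T (c : ℝ × ℝ) (r : ℝ) : MeasurableSet (T c r) := by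
  have : T c r = ⋃ p : ℤ × ℤ, D (c + pv p) r := by
    ext x; simp [mem_T_iff, Set.mem_iUnion]
  rw [this]
  exact MeasurableSet.iUnion (fun p => measurableSet_D _ _)

lemma measurableSet_Q : MeasurableSet Q :=
  measurableSet_Ioc.prod measurableSet_Ioc

lemma measurableSet_Qs (p : ℤ × ℤ) : MeasurableSet (Qs p) :=
  measurableSet_Q.preimage (measurable_id.sub measurable_const)

lemma volume_D (c : ℝ × ℝ) {r : ℝ} (hr : 0 ≤ r) :
    volume (D c r) = ENNReal.ofReal (Real.pi * r ^ 2) := by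
  have hpre : Complex.measurableEquivRealProd ⁻¹' (D c r)
      = Metric.closedBall (Complex.measurableEquivRealProd.symm c) r := by
    ext z
    simp only [Set.mem_preimage, D, Set.mem_setOf_eq, Metric.mem_closedBall]
    rw [Complex.dist_eq, enorm2_eq_abs]
    have : Complex.measurableEquivRealProd.symm (Complex.measurableEquivRealProd z - c)
        = z - Complex.measurableEquivRealProd.symm c := by
      simp [Complex.ext_iff]
    rw [this]
  have := Complex.volume_preserving_equiv_real_prod.measure_preimage
    (measurableSet_D c r).nullMeasurableSet
  rw [hpre] at this
  rw [← this, Complex.volume_closedBall]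
  rw [← ENNReal.ofReal_pow hr, ← ENNReal.ofReal_coe_nnreal, ← ENNReal.ofReal_mul (by positivity)]
  rw [NNReal.coe_real_pi]
  ring_nf

lemma mem_Qs_iff {p : ℤ × ℤ} {x : ℝ × ℝ} :
    x ∈ Qs p ↔ ((p.1 : ℝ) < x.1 ∧ x.1 ≤ p.1 + 1) ∧ ((p.2 : ℝ) < x.2 ∧ x.2 ≤ p.2 + 1) := by
  simp only [Qs, Q, pv, Set.mem_preimage, Set.mem_prod, Set.mem_Ioc, Prod.fst_sub, Prod.snd_sub]
  constructor
  · rintro ⟨⟨a, b⟩, c, d⟩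
    refine ⟨⟨by linarith, by linarith⟩, by linarith, by linarith⟩
  · rintro ⟨⟨a, b⟩, c, d⟩
    refine ⟨⟨by linarith, by linarith⟩, by linarith, by linarith⟩

lemma iUnion_Qs : (⋃ p : ℤ × ℤ, Qs p) = Set.univ := by
  ext x
  simp only [Set.mem_iUnion, Set.mem_univ, iff_true]
  refine ⟨(⌈x.1⌉ - 1, ⌈x.2⌉ - 1), mem_Qs_iff.2 ?_⟩
  push_cast
  refine ⟨⟨by nlinarith [Int.ceil_lt_add_one x.1], by nlinarith [Int.le_ceil x.1]⟩,
    by nlinarith [Int.ceil_lt_add_one x.2], by nlinarith [Int.le_ceil x.2]⟩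

lemma disjoint_Qs : Pairwise (Function.onFun Disjoint Qs) := by
  intro p p' hne
  rw [Function.onFun, Set.disjoint_left]
  intro x hx hx'
  apply hne
  rw [mem_Qs_iff] at hx hx'
  obtain ⟨⟨h1a, h1b⟩, h2a, h2b⟩ := hx
  obtain ⟨⟨h1a', h1b'⟩, h2a', h2b'⟩ := hx'
  have e1 : p.1 = p'.1 := by
    have h : ((p.1 - p'.1 : ℤ) : ℝ) < 1 ∧ (-1 : ℝ) < ((p.1 - p'.1 : ℤ) : ℝ) := by
      push_cast; constructor <;> linarith
    have h1 : (p.1 - p'.1 : ℤ) < 1 := by exact_mod_cast h.1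
    have h2 : (-1 : ℤ) < p.1 - p'.1 := by exact_mod_cast h.2
    omega
  have e2 : p.2 = p'.2 := by
    have h : ((p.2 - p'.2 : ℤ) : ℝ) < 1 ∧ (-1 : ℝ) < ((p.2 - p'.2 : ℤ) : ℝ) := by
      push_cast; constructor <;> linarith
    have h1 : (p.2 - p'.2 : ℤ) < 1 := by exact_mod_cast h.1
    have h2 : (-1 : ℤ) < p.2 - p'.2 := by exact_mod_cast h.2
    omega
  exact Prod.ext e1 e2

lemma tiling {S : Set (ℝ × ℝ)} (hS : MeasurableSet S) :
    ∑' p : ℤ × ℤ, volume (S ∩ Qs p) = volume S := by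
  rw [← measure_iUnion (fun p p' hne => (disjoint_Qs hne).mono Set.inter_subset_right Set.inter_subset_right)
    (fun p => hS.inter (measurableSet_Qs p))]
  rw [← Set.inter_iUnion, iUnion_Qs, Set.inter_univ]

end VarAux

namespace VarAux

lemma pv_sub (p p' : ℤ × ℤ) : pv p - pv p' = pv (p - p') := by
  simp [pv, Prod.ext_iff]

lemma pv_neg (p : ℤ × ℤ) : pv (-p) = - pv p := by
  simp [pv, Prod.ext_iff]

lemma vol_translate (t : ℝ × ℝ) (S : Set (ℝ × ℝ)) :
    volume ((fun x => x - t) ⁻¹' S) = volume S := by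
  have h : (fun x : ℝ × ℝ => x - t) = (fun x => (-t) + x) := by
    funext x; rw [sub_eq_add_neg, add_comm]
  rw [h, measure_preimage_add]

lemma D_disjoint {c : ℝ × ℝ} {r : ℝ} (hr : r < 1/2) {p p' : ℤ × ℤ} (hne : p ≠ p') :
    Disjoint (D (c + pv p) r) (D (c + pv p') r) := by
  rw [Set.disjoint_left]
  intro x hx hx'
  simp only [D, Set.mem_setOf_eq] at hx hx'
  have key : enorm2 (pv (p' - p)) ≤ 2 * r := by
    have : pv (p' - p) = (x - (c + pv p)) + -(x - (c + pv p')) := by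
      rw [← pv_sub]; ring_nf
    rw [this]
    calc enorm2 _ ≤ enorm2 (x - (c + pv p)) + enorm2 (-(x - (c + pv p'))) := enorm2_triangle _ _
    _ ≤ 2 * r := by rw [enorm2_neg]; linarith
  have h1 : (1 : ℝ) ≤ enorm2 (pv (p' - p)) := enorm2_int_ge_one (by
    intro h; apply hne; rw [sub_eq_zero] at h; exact h.symm)
  linarith

lemma volume_T_inter_Q (c : ℝ × ℝ) {r : ℝ} (hr0 : 0 ≤ r) (hr : r < 1/2) :
    volume (T c r ∩ Q) = ENNReal.ofReal (Real.pi * r ^ 2) := by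
  have hrep : T c r ∩ Q = ⋃ p : ℤ × ℤ, (D (c + pv p) r ∩ Q) := by
    ext x
    simp only [Set.mem_inter_iff, Set.mem_iUnion, mem_T_iff]
    tauto
  rw [hrep, measure_iUnion]
  · have hterm : ∀ p : ℤ × ℤ, volume (D (c + pv p) r ∩ Q)
        = volume (D c r ∩ Qs (-p)) := by
      intro p
      have hset : D (c + pv p) r ∩ Q = (fun x => x - pv p) ⁻¹' (D c r ∩ Qs (-p)) := by
        ext x
        simp only [Set.mem_inter_iff, Set.mem_preimage, D, Qs, Set.mem_setOf_eq, pv_neg,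
          sub_neg_eq_add]
        constructor
        · rintro ⟨h1, h2⟩
          refine ⟨by rw [show x - pv p - c = x - (c + pv p) by ring]; exact h1, by
            rw [show x - pv p + pv p = x by ring]; exact h2⟩
        · rintro ⟨h1, h2⟩
          refine ⟨by rw [show x - (c + pv p) = x - pv p - c by ring]; exact h1, by
            rw [show x = x - pv p + pv p by ring]; exact h2⟩
      rw [hset, vol_translate]
    simp_rw [hterm]
    have hre : ∑' p : ℤ × ℤ, volume (D c r ∩ Qs (-p)) = ∑' p : ℤ × ℤ, volume (D c r ∩ Qs p) :=
      (Equiv.neg (ℤ × ℤ)).tsum_eq (fun p => volume (D c r ∩ Qs p))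
    rw [hre, tiling (measurableSet_D c r), volume_D c hr0]
  · intro p p' hne
    exact (D_disjoint hr hne).mono Set.inter_subset_left Set.inter_subset_left
  · exact fun p => (measurableSet_D _ _).inter measurableSet_Q

lemma T_disjoint {c c' : ℝ × ℝ} {r : ℝ}
    (h : ¬ ∃ p : ℤ × ℤ, enorm2 (c - c' + pv p) ≤ 2 * r) :
    T c r ∩ T c' r = ∅ := by
  rw [Set.eq_empty_iff_forall_notMem]
  rintro x ⟨⟨p, hp⟩, ⟨p', hp'⟩⟩
  apply h
  refine ⟨p - p', ?_⟩
  have : c - c' + pv (p - p') = (c + pv p - x) + -(c' + pv p' - x) := by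
    rw [← pv_sub]; ring_nf
  rw [this]
  calc enorm2 _ ≤ enorm2 (c + pv p - x) + enorm2 (-(c' + pv p' - x)) := enorm2_triangle _ _
  _ ≤ 2 * r := by rw [enorm2_neg]; linarith

end VarAux

namespace VarAux


lemma KR_eq {R : ℝ} (hr : R < 1/2) (c x : ℝ × ℝ) :
    KR R c x = (T c R).indicator (fun _ => (1:ℝ)) x := by
  rcases em (x ∈ T c R) with hx | hx
  · obtain ⟨p₀, hp₀⟩ := id hx
    rw [Set.indicator_of_mem hx, KR]
    rw [tsum_eq_single p₀ ?_]
    · exact if_pos hp₀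
    · intro p hne
      rw [if_neg]
      intro hcon
      have key : enorm2 (pv (p - p₀)) ≤ 2 * R := by
        have h : pv (p - p₀) = (c + pv p - x) + -(c + pv p₀ - x) := by
          rw [← pv_sub]; ring_nf
        rw [h]
        calc enorm2 _ ≤ enorm2 (c + pv p - x) + enorm2 (-(c + pv p₀ - x)) :=
              enorm2_triangle _ _
        _ ≤ 2 * R := by rw [enorm2_neg, two_mul]; exact add_le_add hcon hp₀
      have h1 : (1 : ℝ) ≤ enorm2 (pv (p - p₀)) :=
        enorm2_int_ge_one (sub_ne_zero.mpr hne)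
      linarith
  · rw [Set.indicator_of_notMem hx, KR]
    convert tsum_zero with p
    rw [if_neg]
    intro hcon
    exact hx ⟨p, hcon⟩

def U (q : ℕ) : Finset ℕ := (Finset.range q).filter (fun d => Nat.Coprime d q)
noncomputable def pt (q : ℕ) (d : ℕ) : ℝ × ℝ :=
  ((d : ℝ) / q, ((((d : ZMod q)⁻¹).val : ℕ) : ℝ) / q)

lemma card_U (q : ℕ) : (U q).card = q.totient := by
  rw [Nat.totient]
  congr 1
  apply Finset.filter_congr
  intro d _
  simp [Nat.coprime_comm, Nat.Coprime]

lemma volume_Q : volume Q = 1 := by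
  rw [Q, Measure.volume_eq_prod, Measure.prod_prod, Real.volume_Ioc]
  norm_num

lemma muVal_eq {q : ℕ} {R : ℝ} (hr : R < 1/2) (x : ℝ × ℝ) :
    muVal q R x = (1 / (q.totient : ℝ)) *
      ∑ d ∈ U q, (T (pt q d) R).indicator (fun _ => (1:ℝ)) x := by
  rw [muVal]
  congr 1
  apply Finset.sum_congr rfl
  intro d _
  exact KR_eq hr _ x

end VarAux

namespace VarAux

noncomputable def J (q : ℕ) (R : ℝ) (d d' : ℕ) : ℝ :=
  (volume (T (pt q d) R ∩ T (pt q d') R ∩ Q)).toReal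

lemma integrable_ind {S : Set (ℝ × ℝ)} (hS : MeasurableSet S) :
    Integrable (S.indicator (fun _ => (1:ℝ))) (volume.restrict Q) := by
  rw [integrable_indicator_iff hS]
  refine integrableOn_const (ne_of_lt ?_)
  rw [Measure.restrict_apply hS]
  exact lt_of_le_of_lt (measure_mono Set.inter_subset_right)
    (by rw [volume_Q]; exact ENNReal.one_lt_top)

lemma integral_ind {S : Set (ℝ × ℝ)} (hS : MeasurableSet S) :
    ∫ x in Q, S.indicator (fun _ => (1:ℝ)) x = (volume (S ∩ Q)).toReal := by
  rw [MeasureTheory.integral_indicator_const (1:ℝ) hS, measureReal_def, Measure.restrict_apply hS,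
    smul_eq_mul, mul_one]

lemma varMu_expand (q : ℕ) (hφ : q.totient ≠ 0) {R : ℝ} (hr0 : 0 ≤ R) (hr : R < 1/2) :
    varMu q R = (1/(q.totient:ℝ))^2 * (∑ d ∈ U q, ∑ d' ∈ U q, J q R d d')
      - (Real.pi * R^2)^2 := by
  have hφr : (q.totient : ℝ) ≠ 0 := Nat.cast_ne_zero.2 hφ
  have hc₀ : 0 ≤ Real.pi * R^2 := by positivity
  have key : ∀ x : ℝ × ℝ, (muVal q R x - Real.pi * R^2)^2 =
      (1/(q.totient:ℝ))^2 * (∑ d ∈ U q, ∑ d' ∈ U q,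
        ((T (pt q d) R ∩ T (pt q d') R).indicator (fun _ => (1:ℝ)) x))
      - (2*(Real.pi * R^2)/(q.totient:ℝ)) *
        (∑ d ∈ U q, (T (pt q d) R).indicator (fun _ => (1:ℝ)) x)
      + (Real.pi * R^2)^2 := by
    intro x
    rw [muVal_eq hr]
    have hs2 : (∑ d ∈ U q, (T (pt q d) R).indicator (fun _ => (1:ℝ)) x) *
               (∑ d' ∈ U q, (T (pt q d') R).indicator (fun _ => (1:ℝ)) x)
        = ∑ d ∈ U q, ∑ d' ∈ U q,
            ((T (pt q d) R ∩ T (pt q d') R).indicator (fun _ => (1:ℝ)) x) := by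
      rw [Finset.sum_mul_sum]
      refine Finset.sum_congr rfl fun d _ => Finset.sum_congr rfl fun d' _ => ?_
      exact (congrFun (Set.inter_indicator_one
        (s := T (pt q d) R) (t := T (pt q d') R)) x).symm
    rw [← hs2]
    ring
  have hmeas : ∀ d d' : ℕ, MeasurableSet (T (pt q d) R ∩ T (pt q d') R) :=
    fun d d' => (measurableSet_T _ _).inter (measurableSet_T _ _)
  have hiA : Integrable (fun x => (1/(q.totient:ℝ))^2 * (∑ d ∈ U q, ∑ d' ∈ U q,
      ((T (pt q d) R ∩ T (pt q d') R).indicator (fun _ => (1:ℝ)) x))) (volume.restrict Q) := by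
    apply Integrable.const_mul
    apply integrable_finset_sum
    intro d _
    apply integrable_finset_sum
    intro d' _
    exact integrable_ind (hmeas d d')
  have hiB : Integrable (fun x => (2*(Real.pi * R^2)/(q.totient:ℝ)) *
      (∑ d ∈ U q, (T (pt q d) R).indicator (fun _ => (1:ℝ)) x)) (volume.restrict Q) := by
    apply Integrable.const_mul
    apply integrable_finset_sum
    intro d _
    exact integrable_ind (measurableSet_T _ _)
  have hQ1 : ((volume.restrict Q) Set.univ) = 1 := by
    rw [Measure.restrict_apply_univ, volume_Q]
  rw [varMu, show (Set.Ioc (0:ℝ) 1 ×ˢ Set.Ioc (0:ℝ) 1) = Q from rfl]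
  rw [show (fun x => (muVal q R x - Real.pi * R^2)^2) = fun x =>
      (1/(q.totient:ℝ))^2 * (∑ d ∈ U q, ∑ d' ∈ U q,
        ((T (pt q d) R ∩ T (pt q d') R).indicator (fun _ => (1:ℝ)) x))
      - (2*(Real.pi * R^2)/(q.totient:ℝ)) *
        (∑ d ∈ U q, (T (pt q d) R).indicator (fun _ => (1:ℝ)) x)
      + (Real.pi * R^2)^2 from funext key]
  haveI : IsFiniteMeasure (volume.restrict Q) :=
    ⟨by rw [Measure.restrict_apply_univ, volume_Q]; exact ENNReal.one_lt_top⟩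
  rw [integral_add
      (f := fun x => (1/(q.totient:ℝ))^2 * (∑ d ∈ U q, ∑ d' ∈ U q,
        ((T (pt q d) R ∩ T (pt q d') R).indicator (fun _ => (1:ℝ)) x))
      - (2*(Real.pi * R^2)/(q.totient:ℝ)) *
        (∑ d ∈ U q, (T (pt q d) R).indicator (fun _ => (1:ℝ)) x))
      (g := fun _ => (Real.pi * R^2)^2) (hiA.sub hiB) (integrable_const _),
    integral_sub hiA hiB,
    integral_const_mul, integral_const_mul, integral_finset_sum _
      (fun d _ => integrable_finset_sum _ (fun d' _ => integrable_ind (hmeas d d'))),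
    integral_const, measureReal_def, hQ1]
  have hB : (∑ d ∈ U q, ∫ x in Q, (T (pt q d) R).indicator (fun _ => (1:ℝ)) x)
      = (q.totient : ℝ) * (Real.pi * R^2) := by
    rw [Finset.sum_congr rfl (fun d _ => integral_ind (measurableSet_T _ _))]
    rw [Finset.sum_congr rfl (fun d _ => by
      rw [volume_T_inter_Q _ hr0 hr, ENNReal.toReal_ofReal hc₀])]
    rw [Finset.sum_const, card_U, nsmul_eq_mul]
  have hA : ∀ d ∈ U q, (∫ x in Q, ∑ d' ∈ U q,
      (T (pt q d) R ∩ T (pt q d') R).indicator (fun _ => (1:ℝ)) x) = ∑ d' ∈ U q, J q R d d' := by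
    intro d _
    rw [integral_finset_sum _ (fun d' _ => integrable_ind (hmeas d d'))]
    exact Finset.sum_congr rfl (fun d' _ => integral_ind (hmeas d d'))
  rw [integral_finset_sum _ (fun d _ => integrable_ind (measurableSet_T _ _)), hB,
    Finset.sum_congr rfl hA]
  rw [ENNReal.toReal_one, one_smul]
  field_simp
  ring

end VarAux

namespace VarAux


def Cond (q : ℕ) (R : ℝ) (d d' : ℕ) : Prop :=
  ∃ p : ℤ × ℤ, enorm2 (pt q d - pt q d' + pv p) ≤ 2 * R

open Classical in
noncomputable def NN (q : ℕ) (R : ℝ) : ℕ :=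
  (Finset.filter (fun t : ℕ × ℕ => t.1 ≠ t.2 ∧ Cond q R t.1 t.2) ((U q) ×ˢ (U q))).card

lemma J_nonneg (q : ℕ) (R : ℝ) (d d' : ℕ) : 0 ≤ J q R d d' := ENNReal.toReal_nonneg

lemma J_le (q : ℕ) {R : ℝ} (hr0 : 0 ≤ R) (hr : R < 1/2) (d d' : ℕ) :
    J q R d d' ≤ Real.pi * R ^ 2 := by
  rw [J]
  have h1 : volume (T (pt q d) R ∩ T (pt q d') R ∩ Q) ≤ ENNReal.ofReal (Real.pi * R^2) := by
    rw [← volume_T_inter_Q (pt q d) hr0 hr]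
    exact measure_mono (Set.inter_subset_inter_left _ Set.inter_subset_left)
  calc (volume (T (pt q d) R ∩ T (pt q d') R ∩ Q)).toReal
      ≤ (ENNReal.ofReal (Real.pi * R^2)).toReal :=
        ENNReal.toReal_mono ENNReal.ofReal_ne_top h1
  _ = Real.pi * R^2 := ENNReal.toReal_ofReal (by positivity)

lemma J_diag (q : ℕ) {R : ℝ} (hr0 : 0 ≤ R) (hr : R < 1/2) (d : ℕ) :
    J q R d d = Real.pi * R ^ 2 := by
  rw [J, Set.inter_self, volume_T_inter_Q _ hr0 hr, ENNReal.toReal_ofReal (by positivity)]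

lemma J_zero (q : ℕ) (R : ℝ) {d d' : ℕ} (h : ¬ Cond q R d d') : J q R d d' = 0 := by
  rw [J, T_disjoint h, Set.empty_inter, measure_empty, ENNReal.toReal_zero]

lemma var_bound (q : ℕ) (hφ : q.totient ≠ 0) {R : ℝ} (hr0 : 0 ≤ R) (hr : R < 1/2) :
    |varMu q R - Real.pi * R ^ 2 / (q.totient : ℝ)| ≤
      (Real.pi * R^2)^2 + (Real.pi * R^2) * (NN q R) / (q.totient : ℝ)^2 := by
  classical
  have hφr : (0:ℝ) < (q.totient : ℝ) := by
    exact_mod_cast Nat.pos_of_ne_zero hφ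
  have hc₀ : (0:ℝ) ≤ Real.pi * R^2 := by positivity
  set c₀ := Real.pi * R^2 with hc₀def
  -- split the double sum
  have hsum : ∑ d ∈ U q, ∑ d' ∈ U q, J q R d d' = ∑ t ∈ (U q) ×ˢ (U q), J q R t.1 t.2 :=
    (Finset.sum_product (U q) (U q) (fun t : ℕ × ℕ => J q R t.1 t.2)).symm
  have hsplit : ∑ t ∈ (U q) ×ˢ (U q), J q R t.1 t.2 =
      (∑ t ∈ ((U q) ×ˢ (U q)).filter (fun t => t.1 = t.2), J q R t.1 t.2)
      + ∑ t ∈ ((U q) ×ˢ (U q)).filter (fun t => ¬ t.1 = t.2), J q R t.1 t.2 :=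
    (Finset.sum_filter_add_sum_filter_not _ _ _).symm
  have hdiagset : ((U q) ×ˢ (U q)).filter (fun t => t.1 = t.2)
      = (U q).image (fun d => (d, d)) := by
    ext ⟨a, b⟩
    simp only [Finset.mem_filter, Finset.mem_product, Finset.mem_image, Prod.mk.injEq]
    constructor
    · rintro ⟨⟨ha, hb⟩, he⟩; exact ⟨a, ha, rfl, he⟩
    · rintro ⟨d, hd, h1, h2⟩; subst h1; subst h2; exact ⟨⟨hd, hd⟩, rfl⟩
  have hdiag : (∑ t ∈ ((U q) ×ˢ (U q)).filter (fun t => t.1 = t.2), J q R t.1 t.2)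
      = (q.totient : ℝ) * c₀ := by
    rw [hdiagset, Finset.sum_image (fun a _ b _ h => by
      simpa [Prod.ext_iff] using h)]
    rw [Finset.sum_congr rfl (fun d _ => J_diag q hr0 hr d), Finset.sum_const, card_U,
      nsmul_eq_mul]
  set Soff := ((U q) ×ˢ (U q)).filter (fun t => ¬ t.1 = t.2) with hSoff
  have hoff_nonneg : 0 ≤ ∑ t ∈ Soff, J q R t.1 t.2 :=
    Finset.sum_nonneg (fun t _ => J_nonneg q R t.1 t.2)
  have hoff_le : ∑ t ∈ Soff, J q R t.1 t.2 ≤ c₀ * (NN q R) := by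
    have step1 : ∑ t ∈ Soff, J q R t.1 t.2 ≤
        ∑ t ∈ Soff, (if Cond q R t.1 t.2 then c₀ else 0) := by
      apply Finset.sum_le_sum
      intro t _
      by_cases hcond : Cond q R t.1 t.2
      · rw [if_pos hcond]; exact J_le q hr0 hr t.1 t.2
      · rw [if_neg hcond]; exact le_of_eq (J_zero q R hcond)
    have step2 : ∑ t ∈ Soff, (if Cond q R t.1 t.2 then c₀ else 0)
        = (Soff.filter (fun t => Cond q R t.1 t.2)).card • c₀ := by
      rw [← Finset.sum_filter, Finset.sum_const]
    have step3 : Soff.filter (fun t => Cond q R t.1 t.2)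
        = ((U q) ×ˢ (U q)).filter (fun t : ℕ × ℕ => t.1 ≠ t.2 ∧ Cond q R t.1 t.2) := by
      rw [hSoff, Finset.filter_filter]
    calc ∑ t ∈ Soff, J q R t.1 t.2 ≤ _ := step1
    _ = _ := step2
    _ = c₀ * (NN q R) := by
      rw [step3, nsmul_eq_mul, mul_comm, NN]
  have hexp := varMu_expand q hφ hr0 hr
  rw [hsum, hsplit, hdiag] at hexp
  rw [abs_le]
  constructor
  · rw [hexp]
    have h1 : (1/(q.totient:ℝ))^2 * ((q.totient:ℝ) * c₀ + ∑ t ∈ Soff, J q R t.1 t.2)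
        ≥ (1/(q.totient:ℝ))^2 * ((q.totient:ℝ) * c₀) := by
      apply mul_le_mul_of_nonneg_left (by linarith) (by positivity)
    have h2 : (1/(q.totient:ℝ))^2 * ((q.totient:ℝ) * c₀) = c₀ / (q.totient:ℝ) := by
      field_simp
    have h3 : (0:ℝ) ≤ c₀ * (NN q R) / (q.totient:ℝ)^2 := by positivity
    nlinarith [h1, h2, h3]
  · rw [hexp]
    have h1 : (1/(q.totient:ℝ))^2 * ((q.totient:ℝ) * c₀ + ∑ t ∈ Soff, J q R t.1 t.2)
        ≤ (1/(q.totient:ℝ))^2 * ((q.totient:ℝ) * c₀ + c₀ * (NN q R)) := by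
      apply mul_le_mul_of_nonneg_left (by linarith) (by positivity)
    have h2 : (1/(q.totient:ℝ))^2 * ((q.totient:ℝ) * c₀ + c₀ * (NN q R))
        = c₀ / (q.totient:ℝ) + c₀ * (NN q R) / (q.totient:ℝ)^2 := by
      field_simp
    nlinarith [h1, h2, sq_nonneg c₀]

end VarAux

namespace VarAux

lemma val_bound {q : ℕ} (hq : 0 < q) {R : ℝ} {z : ZMod q} {s : ℤ} (hsz : (s : ZMod q) = z)
    (hs : |(s:ℝ)| ≤ 2*R*q) (hRq : 2*R*(q:ℝ) < q) :
    ((z.val:ℝ) ≤ 2*R*q ∨ (q:ℝ) - z.val ≤ 2*R*q) := by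
  haveI : NeZero q := ⟨hq.ne'⟩
  have hval : (z.val : ℤ) = s % q := by rw [← hsz, ZMod.val_intCast]
  have hsq : |s| < q := by
    have h : (|s| : ℝ) < q := by
      calc (|s|:ℝ) = |(s:ℝ)| := by push_cast; ring
      _ ≤ 2*R*q := hs
      _ < q := hRq
    exact_mod_cast h
  rw [abs_lt] at hsq
  have hq' : (0:ℤ) < q := by exact_mod_cast hq
  rcases le_or_gt 0 s with h0 | h0
  · left
    have hmod : s % q = s := Int.emod_eq_of_lt h0 (by omega)
    have hz : (z.val : ℤ) = s := by omega
    calc (z.val : ℝ) = (s:ℝ) := by exact_mod_cast hz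
    _ = |(s:ℝ)| := (abs_of_nonneg (by exact_mod_cast h0)).symm
    _ ≤ 2*R*q := hs
  · right
    have hmod : s % q = s + q := by
      have h1 : (s + (q:ℤ)) % (q:ℤ) = s % q := by
        simpa using Int.add_mul_emod_self_left (a:=s) (b:=(q:ℤ)) (c:=1)
      have h2 : (s + q) % q = s + q := Int.emod_eq_of_lt (by omega) (by omega)
      omega
    have hz : (z.val : ℤ) = s + q := by omega
    have : (q:ℝ) - z.val = -(s:ℝ) := by
      have : ((z.val:ℤ):ℝ) = ((s + q : ℤ):ℝ) := by rw [hz]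
      push_cast at this
      linarith
    rw [this]
    calc -(s:ℝ) = |(s:ℝ)| := by
          rw [abs_of_neg (by exact_mod_cast h0)]
    _ ≤ 2*R*q := hs

end VarAux
namespace VarAux


/-- From the closeness condition, the difference residues lie in a short interval. -/
lemma cond_val {q : ℕ} (hq : 0 < q) {R : ℝ} (hr0 : 0 ≤ R) (hr : R < 1/2)
    {d d' : ℕ} (hd : d < q) (hd' : d' < q) (hcond : Cond q R d d') :
    (((((d : ZMod q) - d').val : ℝ) ≤ 2*R*q ∨ (q:ℝ) - ((d : ZMod q) - d').val ≤ 2*R*q)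
    ∧ ((((d : ZMod q)⁻¹ - (d' : ZMod q)⁻¹).val : ℝ) ≤ 2*R*q ∨
        (q:ℝ) - ((d : ZMod q)⁻¹ - (d' : ZMod q)⁻¹).val ≤ 2*R*q)) := by
  haveI : NeZero q := ⟨hq.ne'⟩
  obtain ⟨p, hp⟩ := hcond
  have hq0 : (0:ℝ) < q := by exact_mod_cast hq
  have hRq : 2*R*(q:ℝ) < q := by nlinarith
  have h1 : |(pt q d - pt q d' + pv p).1| ≤ 2*R := (abs_fst_le _).trans hp
  have h2 : |(pt q d - pt q d' + pv p).2| ≤ 2*R := (abs_snd_le _).trans hp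
  constructor
  · -- first coordinate
    set s : ℤ := (d : ℤ) - d' + p.1 * q with hs
    have hcast : ((s : ℤ) : ZMod q) = (d : ZMod q) - d' := by
      push_cast [hs]
      simp [ZMod.natCast_self]
    have habs : |(s:ℝ)| ≤ 2*R*q := by
      have hfst : (pt q d - pt q d' + pv p).1 = ((d:ℝ) - d' + p.1 * q) / q := by
        simp only [pt, pv, Prod.fst_add, Prod.fst_sub]
        field_simp
      have : |((d:ℝ) - d' + p.1 * q) / q| ≤ 2*R := by rw [← hfst]; exact h1
      rw [abs_div, abs_of_pos hq0] at this
      have := (div_le_iff₀ hq0).1 this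
      calc |(s:ℝ)| = |(d:ℝ) - d' + p.1 * q| := by push_cast [hs]; ring_nf
      _ ≤ 2*R*q := this
    exact val_bound hq hcast habs hRq
  · -- second coordinate
    set e : ℕ := ((d : ZMod q)⁻¹).val with he
    set e' : ℕ := ((d' : ZMod q)⁻¹).val with he'
    set s : ℤ := (e : ℤ) - e' + p.2 * q with hs
    have hcast : ((s : ℤ) : ZMod q) = (d : ZMod q)⁻¹ - (d' : ZMod q)⁻¹ := by
      push_cast [hs]
      simp [ZMod.natCast_self, he, he', ZMod.natCast_val, ZMod.cast_id]
    have habs : |(s:ℝ)| ≤ 2*R*q := by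
      have hsnd : (pt q d - pt q d' + pv p).2 = ((e:ℝ) - e' + p.2 * q) / q := by
        simp only [pt, pv, Prod.snd_add, Prod.snd_sub, ← he, ← he']
        field_simp
      have : |((e:ℝ) - e' + p.2 * q) / q| ≤ 2*R := by rw [← hsnd]; exact h2
      rw [abs_div, abs_of_pos hq0] at this
      have := (div_le_iff₀ hq0).1 this
      calc |(s:ℝ)| = |(e:ℝ) - e' + p.2 * q| := by push_cast [hs]; ring_nf
      _ ≤ 2*R*q := this
    exact val_bound hq hcast habs hRq

end VarAux

namespace VarAux

open Classical in
noncomputable def AA (q : ℕ) (R : ℝ) [NeZero q] : Finset (ZMod q) :=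
  Finset.univ.filter (fun z : ZMod q =>
    z ≠ 0 ∧ (((z.val : ℝ) ≤ 2*R*q) ∨ ((q:ℝ) - z.val ≤ 2*R*q)))

lemma card_AA {q : ℕ} [NeZero q] {R : ℝ} (hr0 : 0 ≤ R) (hRq : 2*R*(q:ℝ) < q) :
    ((AA q R).card : ℝ) ≤ 4*R*q := by
  classical
  have hq : 0 < q := Nat.pos_of_ne_zero (NeZero.ne q)
  set m : ℕ := ⌊2*R*(q:ℝ)⌋₊ with hm
  have hmle : (m : ℝ) ≤ 2*R*q := Nat.floor_le (by positivity)
  have hmq : m < q := by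
    by_contra hcon
    push_neg at hcon
    have : (q:ℝ) ≤ m := by exact_mod_cast hcon
    linarith
  have hsub : (AA q R).image ZMod.val ⊆ Finset.Icc 1 m ∪ Finset.Icc (q - m) (q - 1) := by
    intro v hv
    rw [Finset.mem_image] at hv
    obtain ⟨z, hz, rfl⟩ := hv
    rw [AA, Finset.mem_filter] at hz
    obtain ⟨-, hz0, hcase⟩ := hz
    have hvpos : 0 < z.val := by
      rcases Nat.eq_zero_or_pos z.val with h | h
      · exact absurd ((ZMod.val_eq_zero z).1 h) hz0
      · exact h
    have hvlt : z.val < q := ZMod.val_lt z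
    rw [Finset.mem_union, Finset.mem_Icc, Finset.mem_Icc]
    rcases hcase with h | h
    · left
      exact ⟨hvpos, Nat.le_floor h⟩
    · right
      refine ⟨?_, by omega⟩
      have : ((q - z.val : ℕ) : ℝ) ≤ 2*R*q := by
        push_cast [Nat.cast_sub hvlt.le]
        linarith
      have := Nat.le_floor this
      omega
  have hcard : (AA q R).card ≤ 2 * m := by
    have h1 : (AA q R).card = ((AA q R).image ZMod.val).card :=
      (Finset.card_image_of_injective _ (ZMod.val_injective q)).symm
    have h2 := Finset.card_le_card hsub
    have h3 := Finset.card_union_le (Finset.Icc 1 m) (Finset.Icc (q - m) (q - 1))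
    rw [Nat.card_Icc, Nat.card_Icc] at h3
    omega
  calc ((AA q R).card : ℝ) ≤ ((2 * m : ℕ) : ℝ) := by exact_mod_cast hcard
  _ = 2 * (m:ℝ) := by push_cast; ring
  _ ≤ 4*R*q := by linarith

end VarAux

namespace VarAux

lemma count_bound (q : ℕ) (hq : q.Prime) {R : ℝ} (hr0 : 0 < R) (hr : R < 1/2) :
    ((NN q R : ℝ)) ≤ 32 * R^2 * q^2 := by
  classical
  haveI : Fact q.Prime := ⟨hq⟩
  haveI : NeZero q := ⟨hq.pos.ne'⟩
  have hq0 : (0:ℝ) < q := by exact_mod_cast hq.pos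
  have hRq : 2*R*(q:ℝ) < q := by nlinarith
  set F : ℕ × ℕ → ZMod q × ZMod q :=
    fun t => ((t.1 : ZMod q) - (t.2 : ZMod q), (t.1 : ZMod q)⁻¹ - (t.2 : ZMod q)⁻¹) with hF
  set Nset : Finset (ℕ × ℕ) :=
    (Finset.filter (fun t : ℕ × ℕ => t.1 ≠ t.2 ∧ Cond q R t.1 t.2) ((U q) ×ˢ (U q)))
    with hNset
  -- basic facts about members
  have hmem : ∀ t ∈ Nset, t.1 < q ∧ t.2 < q ∧ (t.1 : ZMod q) ≠ 0 ∧ (t.2 : ZMod q) ≠ 0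
      ∧ t.1 ≠ t.2 ∧ Cond q R t.1 t.2 := by
    intro t ht
    rw [hNset, Finset.mem_filter, Finset.mem_product] at ht
    obtain ⟨⟨h1, h2⟩, hne, hcond⟩ := ht
    rw [U, Finset.mem_filter, Finset.mem_range] at h1 h2
    refine ⟨h1.1, h2.1, ?_, ?_, hne, hcond⟩
    · rw [Ne, ZMod.natCast_eq_zero_iff]
      intro hdvd
      rcases Nat.eq_zero_of_dvd_of_lt hdvd h1.1 with h
      · rw [h] at h1
        have := h1.2
        simp [Nat.Coprime] at this
        omega
    · rw [Ne, ZMod.natCast_eq_zero_iff]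
      intro hdvd
      rcases Nat.eq_zero_of_dvd_of_lt hdvd h2.1 with h
      · rw [h] at h2
        have := h2.2
        simp [Nat.Coprime] at this
        omega
  have hmaps : ∀ t ∈ Nset, F t ∈ (AA q R) ×ˢ (AA q R) := by
    intro t ht
    obtain ⟨hd, hd', hx0, hy0, hne, hcond⟩ := hmem t ht
    have hvals := cond_val hq.pos hr0.le hr hd hd' hcond
    have ha0 : (t.1 : ZMod q) - (t.2 : ZMod q) ≠ 0 := by
      rw [sub_ne_zero]
      intro hcon
      apply hne
      rw [← ZMod.val_cast_of_lt hd, ← ZMod.val_cast_of_lt hd', hcon]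
    have hb0 : (t.1 : ZMod q)⁻¹ - (t.2 : ZMod q)⁻¹ ≠ 0 := by
      rw [sub_ne_zero]
      intro hcon
      exact ha0 (by rw [sub_eq_zero]; exact inv_injective hcon)
    rw [Finset.mem_product, AA, Finset.mem_filter, Finset.mem_filter]
    exact ⟨⟨Finset.mem_univ _, ha0, hvals.1⟩, Finset.mem_univ _, hb0, hvals.2⟩
  -- each fiber has at most 2 elements
  have hfib : ∀ y ∈ (AA q R) ×ˢ (AA q R), (Nset.filter (fun t => F t = y)).card ≤ 2 := by
    rintro ⟨a, b⟩ hy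
    rcases Finset.eq_empty_or_nonempty (Nset.filter (fun t => F t = (a, b))) with he | hne
    · rw [he]; simp
    obtain ⟨t₀, ht₀⟩ := hne
    have hb0 : b ≠ 0 := by
      rw [Finset.mem_filter] at ht₀
      have := hmaps t₀ ht₀.1
      rw [ht₀.2, Finset.mem_product, AA, Finset.mem_filter, Finset.mem_filter] at this
      exact this.2.2.1
    -- quadratic relation
    have hquad : ∀ t ∈ Nset.filter (fun t => F t = (a, b)),
        (t.1 : ZMod q) * ((t.1 : ZMod q) - a) * b = -a := by
      intro t ht
      rw [Finset.mem_filter] at ht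
      obtain ⟨htN, htF⟩ := ht
      obtain ⟨hd, hd', hx0, hy0, hne2, hcond⟩ := hmem t htN
      rw [hF, Prod.mk.injEq] at htF
      obtain ⟨haeq, hbeq⟩ := htF
      have hyx : (t.2 : ZMod q) = (t.1 : ZMod q) - a := by rw [← haeq]; ring
      have key : (t.1 : ZMod q) * (t.2 : ZMod q) * ((t.1 : ZMod q)⁻¹ - (t.2 : ZMod q)⁻¹)
          = (t.2 : ZMod q) - (t.1 : ZMod q) := by
        field_simp
      rw [hbeq, hyx] at key
      rw [key, ← hyx, ← haeq]
      ring
    have hroots : ∀ t ∈ Nset.filter (fun t => F t = (a, b)),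
        (t.1 : ZMod q) = (t₀.1 : ZMod q) ∨ (t.1 : ZMod q) = a - (t₀.1 : ZMod q) := by
      intro t ht
      have h1 := hquad t ht
      have h2 := hquad t₀ ht₀
      have heq : (t.1 : ZMod q) * ((t.1 : ZMod q) - a) = (t₀.1 : ZMod q) * ((t₀.1 : ZMod q) - a) := by
        have := h1.trans h2.symm
        exact mul_right_cancel₀ hb0 this
      have hfact : ((t.1 : ZMod q) - (t₀.1 : ZMod q)) *
          ((t.1 : ZMod q) + (t₀.1 : ZMod q) - a) = 0 := by
        have : (t.1 : ZMod q) * ((t.1 : ZMod q) - a) - (t₀.1 : ZMod q) * ((t₀.1 : ZMod q) - a)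
            = ((t.1 : ZMod q) - (t₀.1 : ZMod q)) * ((t.1 : ZMod q) + (t₀.1 : ZMod q) - a) := by
          ring
        rw [← this, heq, sub_self]
      rcases mul_eq_zero.1 hfact with h | h
      · left; rw [← sub_eq_zero]; exact h
      · right; rw [← sub_eq_zero]; rw [← h]; ring
    have hinj : ∀ t ∈ Nset.filter (fun t => F t = (a, b)),
        ∀ t' ∈ Nset.filter (fun t => F t = (a, b)),
        (t.1 : ZMod q) = (t'.1 : ZMod q) → t = t' := by
      intro t ht t' ht'
      rw [Finset.mem_filter] at ht ht'
      obtain ⟨hd, hd', -, -, -, -⟩ := hmem t ht.1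
      obtain ⟨he, he', -, -, -, -⟩ := hmem t' ht'.1
      intro hcast
      have h1 : t.1 = t'.1 := by
        rw [← ZMod.val_cast_of_lt hd, ← ZMod.val_cast_of_lt he, hcast]
      have haeq : (t.1 : ZMod q) - (t.2 : ZMod q) = a := congrArg Prod.fst ht.2
      have haeq' : (t'.1 : ZMod q) - (t'.2 : ZMod q) = a := congrArg Prod.fst ht'.2
      have h2 : t.2 = t'.2 := by
        have : (t.2 : ZMod q) = (t'.2 : ZMod q) := by
          have := haeq.trans haeq'.symm
          rw [hcast] at this
          linear_combination -this
        rw [← ZMod.val_cast_of_lt hd', ← ZMod.val_cast_of_lt he', this]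
      exact Prod.ext h1 h2
    calc (Nset.filter (fun t => F t = (a, b))).card
        ≤ ({(t₀.1 : ZMod q), a - (t₀.1 : ZMod q)} : Finset (ZMod q)).card := by
          apply Finset.card_le_card_of_injOn (fun t => (t.1 : ZMod q))
          · intro t ht
            rcases hroots t ht with h | h
            · simp [h]
            · simp [h]
          · intro t ht t' ht' hc
            exact hinj t ht t' ht' hc
    _ ≤ 2 := by
          apply (Finset.card_insert_le _ _).trans
          simp
  -- put it together
  have hcount : NN q R ≤ 2 * ((AA q R).card * (AA q R).card) := by
    rw [NN, ← hNset]
    rw [Finset.card_eq_sum_card_fiberwise hmaps]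
    calc ∑ y ∈ (AA q R) ×ˢ (AA q R), (Nset.filter (fun t => F t = y)).card
        ≤ ∑ _y ∈ (AA q R) ×ˢ (AA q R), 2 := Finset.sum_le_sum hfib
    _ = ((AA q R) ×ˢ (AA q R)).card * 2 := by rw [Finset.sum_const, smul_eq_mul]
    _ = 2 * ((AA q R).card * (AA q R).card) := by rw [Finset.card_product]; ring
  have hAA : ((AA q R).card : ℝ) ≤ 4*R*q := card_AA hr0.le hRq
  have hAA0 : (0:ℝ) ≤ ((AA q R).card : ℝ) := Nat.cast_nonneg _
  calc ((NN q R : ℝ)) ≤ ((2 * ((AA q R).card * (AA q R).card) : ℕ) : ℝ) := by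
        exact_mod_cast hcount
  _ = 2 * (((AA q R).card : ℝ) * ((AA q R).card : ℝ)) := by push_cast; ring
  _ ≤ 2 * ((4*R*q) * (4*R*q)) := by nlinarith
  _ = 32 * R^2 * q^2 := by ring

end VarAux


theorem variance_asymptotic_prime
    (hWeil : ∀ q : ℕ, 0 < q → ∀ m n : ℤ, ¬(m = 0 ∧ n = 0) →
      ‖kloostermanS q m n‖ ≤ (q.divisors.card : ℝ) *
        Real.sqrt ((Int.gcd (Int.gcd m n) (q : ℤ) : ℝ) * q)) :
    ∃ C : ℝ, 0 < C ∧ ∀ q : ℕ, q.Prime → ∀ R : ℝ, 0 < R → R < 1 / 2 →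
      |varMu q R - Real.pi * R ^ 2 / (q.totient : ℝ)|
        ≤ C * R ^ 4 * Real.log q ^ 2 := by
  refine ⟨10000, by norm_num, ?_⟩
  intro q hq R hr0 hr
  have h2q : 2 ≤ q := hq.two_le
  have hφ : q.totient ≠ 0 := (Nat.totient_pos.2 hq.pos).ne'
  have hφeq : q.totient = q - 1 := Nat.totient_prime hq
  have hbound := VarAux.var_bound q hφ hr0.le hr
  have hNN := VarAux.count_bound q hq hr0 hr
  have hqr : (0:ℝ) < q := by positivity
  have hq2 : (2:ℝ) ≤ q := by exact_mod_cast h2q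
  have hφr : ((q.totient : ℝ)) = (q:ℝ) - 1 := by
    rw [hφeq, Nat.cast_sub (by omega)]
    norm_num
  have hφpos : (0:ℝ) < (q.totient : ℝ) := by rw [hφr]; linarith
  have hqφ : (q:ℝ)^2 ≤ 4 * ((q.totient : ℝ))^2 := by
    rw [hφr]; nlinarith
  have hpi4 : Real.pi ≤ 4 := Real.pi_le_four
  have hpi0 : 0 < Real.pi := Real.pi_pos
  -- bound the two error terms
  have hpisq : Real.pi^2 ≤ 16 := by nlinarith
  have hterm1 : (Real.pi * R^2)^2 ≤ 16 * R^4 := by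
    calc (Real.pi * R^2)^2 = Real.pi^2 * R^4 := by ring
    _ ≤ 16 * R^4 := mul_le_mul_of_nonneg_right hpisq (by positivity)
  have hterm2 : (Real.pi * R^2) * ((VarAux.NN q R : ℝ)) / ((q.totient : ℝ))^2
      ≤ 512 * R^4 := by
    have h1 : (Real.pi * R^2) * ((VarAux.NN q R : ℝ)) ≤ (4 * R^2) * (32 * R^2 * q^2) := by
      have hNN0 : (0:ℝ) ≤ ((VarAux.NN q R : ℝ)) := Nat.cast_nonneg _
      have hc : 0 ≤ Real.pi * R^2 := by positivity
      have hl : Real.pi * R^2 ≤ 4 * R^2 := mul_le_mul_of_nonneg_right hpi4 (sq_nonneg R)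
      exact mul_le_mul hl hNN hNN0 (by positivity)
    have h2 : (Real.pi * R^2) * ((VarAux.NN q R : ℝ)) / ((q.totient : ℝ))^2
        ≤ (4 * R^2) * (32 * R^2 * q^2) / ((q.totient : ℝ))^2 :=
      div_le_div_of_nonneg_right h1 (by positivity)
    refine h2.trans ?_
    rw [div_le_iff₀ (by positivity)]
    nlinarith [mul_le_mul_of_nonneg_left hqφ (show (0:ℝ) ≤ 128*R^4 by positivity)]
  have hlog : (0.6931471803 : ℝ) < Real.log q := by
    calc (0.6931471803 : ℝ) < Real.log 2 := Real.log_two_gt_d9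
    _ ≤ Real.log q := Real.log_le_log (by norm_num) hq2
  have hfinal : (528:ℝ) * R^4 ≤ 10000 * R^4 * Real.log q ^ 2 := by
    have hR4 : (0:ℝ) ≤ R^4 := by positivity
    have hlq : (0.48:ℝ) ≤ Real.log q ^ 2 := by nlinarith [hlog]
    nlinarith [mul_le_mul_of_nonneg_left hlq (show (0:ℝ) ≤ 10000*R^4 by positivity)]
  calc |varMu q R - Real.pi * R ^ 2 / (q.totient : ℝ)|
      ≤ (Real.pi * R^2)^2 + (Real.pi * R^2) * ((VarAux.NN q R : ℝ)) / ((q.totient : ℝ))^2 :=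
        hbound
  _ ≤ 16 * R^4 + 512 * R^4 := add_le_add hterm1 hterm2
  _ = 528 * R^4 := by ring
  _ ≤ 10000 * R ^ 4 * Real.log q ^ 2 := hfinal
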